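/- Let Y₁,…,Y_N be nonnegative real-valued functions on a set Ω, set Z₀ = 0 and Z_n = Σ_{j=1}^n Y_j, and let k ≥ 0 be a real number. Then pointwise on Ω: Z_N · 1_{{Z_N > 2k}} ≤ 3 Σ_{n=1}^N Y_n · 1_{{Z_n > k}}. -/

import Mathlib

open Finset Set

/-- If `Y₁,…,Y_N ≥ 0`, `Z_n = Σ_{j=1}^n Y_j` and `k ≥ 0`, then pointwise
`Z_N · 1_{Z_N > 2k} ≤ 3 Σ_{n=1}^N Y_n · 1_{Z_n > k}`. -/
theorem stmt19 {Ω : Type*} (N : ℕ) (Y : ℕ → Ω → ℝ)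
    (hY : ∀ n ∈ Finset.Icc 1 N, ∀ ω : Ω, 0 ≤ Y n ω)
    (k : ℝ) (hk : 0 ≤ k) (ω : Ω) :
    Set.indicator {ω' : Ω | 2 * k < ∑ j ∈ Finset.Icc 1 N, Y j ω'}
        (fun ω' => ∑ j ∈ Finset.Icc 1 N, Y j ω') ω ≤
      3 * ∑ n ∈ Finset.Icc 1 N,
        Set.indicator {ω' : Ω | k < ∑ j ∈ Finset.Icc 1 n, Y j ω'} (Y n) ω := by
  set S : ℕ → ℝ := fun n => ∑ j ∈ Finset.Icc 1 n, Y j ω with hS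
  have hSmono : ∀ a b : ℕ, a ≤ b → b ≤ N → S a ≤ S b := by
    intro a b hab hbN
    have : S a + ∑ j ∈ Finset.Ioc a b, Y j ω = S b := by
      simp only [hS, ← Finset.Icc_add_one_left_eq_Ioc, Nat.succ_eq_add_one, Nat.zero_add]
      rw [show Finset.Icc 1 a = Finset.Ioc 0 a by rw [← Finset.Icc_add_one_left_eq_Ioc]; simp,
          show Finset.Icc 1 b = Finset.Ioc 0 b by rw [← Finset.Icc_add_one_left_eq_Ioc]; simp,
          show Finset.Icc (a+1) b = Finset.Ioc a b by rw [← Finset.Icc_add_one_left_eq_Ioc]]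
      exact Finset.sum_Ioc_consecutive _ (Nat.zero_le a) hab
    have hnn : 0 ≤ ∑ j ∈ Finset.Ioc a b, Y j ω := by
      apply Finset.sum_nonneg
      intro j hj
      rw [Finset.mem_Ioc] at hj
      exact hY j (Finset.mem_Icc.mpr ⟨Nat.one_le_iff_ne_zero.mpr (by omega), hj.2.trans hbN⟩) ω
    linarith
  by_cases h : 2 * k < S N
  · have hmem : ω ∈ {ω' : Ω | 2 * k < ∑ j ∈ Finset.Icc 1 N, Y j ω'} := h
    rw [Set.indicator_of_mem hmem]
    have hex : ∃ n, n ≤ N ∧ k < S n := ⟨N, le_refl N, by linarith⟩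
    classical
    set τ := Nat.find hex with hτ
    obtain ⟨hτN, hτk⟩ := Nat.find_spec hex
    have hτ1 : 1 ≤ τ := by
      by_contra hc
      have h0 : τ = 0 := by omega
      have hτk' : k < S τ := hτk
      rw [h0] at hτk'
      have hτk := hτk'
      simp [hS] at hτk
      linarith
    have hτm : S (τ - 1) ≤ k := by
      have := Nat.find_min hex (show τ - 1 < τ by omega)
      push_neg at this
      exact this (by omega)
    -- sum over Icc τ N equals S N - S (τ-1)
    have hsum : ∑ n ∈ Finset.Icc τ N, Y n ω = S N - S (τ - 1) := by
      have : S (τ - 1) + ∑ j ∈ Finset.Ioc (τ - 1) N, Y j ω = S N := by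
        simp only [hS]
        rw [show Finset.Icc 1 (τ-1) = Finset.Ioc 0 (τ-1) by rw [← Finset.Icc_add_one_left_eq_Ioc]; simp,
            show Finset.Icc 1 N = Finset.Ioc 0 N by rw [← Finset.Icc_add_one_left_eq_Ioc]; simp]
        exact Finset.sum_Ioc_consecutive _ (Nat.zero_le _) (by omega)
      rw [show Finset.Icc τ N = Finset.Ioc (τ - 1) N by
        rw [← Finset.Icc_add_one_left_eq_Ioc]; congr 1; omega]
      linarith
    have hstep : ∑ n ∈ Finset.Icc τ N,
        Set.indicator {ω' : Ω | k < ∑ j ∈ Finset.Icc 1 n, Y j ω'} (Y n) ω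
        = ∑ n ∈ Finset.Icc τ N, Y n ω := by
      apply Finset.sum_congr rfl
      intro n hn
      rw [Finset.mem_Icc] at hn
      exact Set.indicator_of_mem (show ω ∈ {ω' : Ω | k < ∑ j ∈ Finset.Icc 1 n, Y j ω'} from
        lt_of_lt_of_le hτk (hSmono τ n hn.1 hn.2)) _
    have hsub : ∑ n ∈ Finset.Icc τ N,
        Set.indicator {ω' : Ω | k < ∑ j ∈ Finset.Icc 1 n, Y j ω'} (Y n) ω
        ≤ ∑ n ∈ Finset.Icc 1 N,
        Set.indicator {ω' : Ω | k < ∑ j ∈ Finset.Icc 1 n, Y j ω'} (Y n) ω := by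
      apply Finset.sum_le_sum_of_subset_of_nonneg
      · apply Finset.Icc_subset_Icc_left hτ1
      · intro i hi _
        exact Set.indicator_nonneg (fun x _ => hY i hi x) ω
    have key : S N - S (τ - 1) ≤ ∑ n ∈ Finset.Icc 1 N,
        Set.indicator {ω' : Ω | k < ∑ j ∈ Finset.Icc 1 n, Y j ω'} (Y n) ω := by
      rw [← hsum, ← hstep]; exact hsub
    linarith
  · have hmem : ω ∉ {ω' : Ω | 2 * k < ∑ j ∈ Finset.Icc 1 N, Y j ω'} := h
    rw [Set.indicator_of_notMem hmem]
    have : 0 ≤ ∑ n ∈ Finset.Icc 1 N,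
        Set.indicator {ω' : Ω | k < ∑ j ∈ Finset.Icc 1 n, Y j ω'} (Y n) ω :=
      Finset.sum_nonneg fun i hi => Set.indicator_nonneg (fun x _ => hY i hi x) ω
    linarith
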